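/- Let F be a piecewise translation of m = d+1 branches in ℝ^d whose translation vectors v_0, …, v_d have rank d, and assume F is of finite type. Let (α_0, …, α_d) be the unique tuple with all α_i > 0, Σ α_i = 1 and Σ α_i v_i = 0. Then for Lebesgue-almost every x ∈ Ω and every index i, the frequency of visits of the orbit of x to P_i is well defined and equals α_i: lim_{k→∞} (1/k) · card{0 ≤ n < k : F^n(x) ∈ P_i} = α_i. -/

import Mathlib

open MeasureTheory Topology Filter Set

/-- A piecewise translation map (PWT) of `m` branches in `ℝ^d`: a region `Ω`
partitioned into regions `P 0, …, P (m-1)` with null boundaries and pairwise disjoint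
interiors, together with translation vectors `v i` such that `P i + v i ⊆ Ω`, and a fixed
measurable resolution `idx` of the ambiguity on overlapping boundaries. -/
structure PWT (d m : ℕ) where
  Om : Set (Fin d → ℝ)
  P : Fin m → Set (Fin d → ℝ)
  v : Fin m → (Fin d → ℝ)
  idx : (Fin d → ℝ) → Fin m
  compact_Om : IsCompact Om
  region_Om : Om = closure (interior Om)
  compact_P : ∀ i, IsCompact (P i)
  region_P : ∀ i, P i = closure (interior (P i))
  union_P : Om = ⋃ i, P i
  disj_P : ∀ i j, i ≠ j → interior (P i) ∩ interior (P j) = ∅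
  null_bd_P : ∀ i, volume (frontier (P i)) = 0
  translate_mem : ∀ i, ∀ x ∈ P i, x + v i ∈ Om
  idx_mem : ∀ x ∈ Om, x ∈ P (idx x)
  idx_meas : Measurable idx

namespace PWT

variable {d m : ℕ}

/-- The piecewise translation map `F(x) = x + v_{i(x)}`. -/
def F (T : PWT d m) (x : Fin d → ℝ) : Fin d → ℝ := x + T.v (T.idx x)

/-- `Ω_0 = Ω`, `Ω_{n+1} = closure (F(Ω_n))`. -/
def OmSeq (T : PWT d m) : ℕ → Set (Fin d → ℝ)
  | 0 => T.Om
  | n + 1 => closure (T.F '' T.OmSeq n)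

/-- The attractor `A = ⋂ₙ Ω_n`. -/
def attractor (T : PWT d m) : Set (Fin d → ℝ) := ⋂ n, T.OmSeq n

/-- The fate map `𝓕(x) = (i(x), i(F x), i(F² x), …)`. -/
def fate (T : PWT d m) (x : Fin d → ℝ) : ℕ → Fin m := fun n => T.idx (T.F^[n] x)

/-- The matrix whose columns are the lattice generators `v_1 - v_0, …, v_d - v_0`. -/
noncomputable def latMatrix (T : PWT d (d + 1)) : Matrix (Fin d) (Fin d) ℝ :=
  Matrix.of fun i j => (T.v j.succ - T.v 0) i

/-- The canonical projection `π : ℝ^d → T = ℝ^d/L ≅ (ℝ/ℤ)^d`, expressed in the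
coordinates given by the lattice basis `v_1 - v_0, …, v_d - v_0` of `L`. -/
noncomputable def torusProj (T : PWT d (d + 1)) (x : Fin d → ℝ) : Fin d → AddCircle (1 : ℝ) :=
  fun i => ((T.latMatrix⁻¹.mulVec x) i : AddCircle (1 : ℝ))

end PWT


/-- For a finite type piecewise translation of `m = d+1` branches in `ℝ^d`
with translation vectors of rank `d`, and `(α_0, …, α_d)` the unique tuple with all
`α_i > 0`, `Σ α_i = 1` and `Σ α_i v_i = 0`: for Lebesgue-almost every `x ∈ Ω` and every
`i`, the frequency of visits of the orbit of `x` to `P i` is well defined and equals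
`α_i`. -/
lemma PWT.preimage_null {d m : ℕ} (T : PWT d m) {N : Set (Fin d → ℝ)}
    (hN : volume N = 0) : volume (T.F ⁻¹' N) = 0 := by
  have hsub : T.F ⁻¹' N ⊆ ⋃ j : Fin m, (fun x => T.v j + x) ⁻¹' N := by
    intro x hx
    refine mem_iUnion.2 ⟨T.idx x, ?_⟩
    simpa [PWT.F, add_comm] using hx
  refine measure_mono_null hsub (measure_iUnion_null fun j => ?_)
  rw [measure_preimage_add]
  exact hN

theorem pwt_visit_frequencies {d : ℕ} (T : PWT d (d + 1))
    (hrank : LinearIndependent ℝ (fun i : Fin d => T.v i.succ - T.v 0))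
    (hfin : ∃ n : ℕ, T.OmSeq (n + 1) = T.OmSeq n)
    (α : Fin (d + 1) → ℝ) (hpos : ∀ i, 0 < α i) (hsum : ∑ i, α i = 1)
    (hrel : ∑ i, α i • T.v i = 0) :
    ∀ᵐ x ∂(volume.restrict T.Om), ∀ i : Fin (d + 1),
      Tendsto (fun k : ℕ => ({n : ℕ | n < k ∧ T.F^[n] x ∈ T.P i}.ncard : ℝ) / k)
        atTop (𝓝 (α i)) := by
  classical
  set B : Set (Fin d → ℝ) := ⋃ i : Fin (d + 1), frontier (T.P i) with hBdef
  have hBnull : volume B = 0 := measure_iUnion_null fun i => T.null_bd_P i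
  -- preimages of B under iterates are null
  have hiter : ∀ n : ℕ, volume (T.F^[n] ⁻¹' B) = 0 := by
    intro n
    induction n with
    | zero => simpa using hBnull
    | succ n ih =>
      rw [Function.iterate_succ]
      rw [Set.preimage_comp]
      exact T.preimage_null ih
  have hUnull : volume (⋃ n : ℕ, T.F^[n] ⁻¹' B) = 0 := measure_iUnion_null hiter
  have h1 : ∀ᵐ x ∂(volume.restrict T.Om), x ∉ ⋃ n : ℕ, T.F^[n] ⁻¹' B := by
    refine measure_eq_zero_iff_ae_notMem.mp (le_antisymm ?_ zero_le)
    calc (volume.restrict T.Om) (⋃ n : ℕ, T.F^[n] ⁻¹' B)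
        ≤ volume (⋃ n : ℕ, T.F^[n] ⁻¹' B) := Measure.restrict_le_self _
      _ = 0 := hUnull
  have h2 : ∀ᵐ x ∂(volume.restrict T.Om), x ∈ T.Om :=
    ae_restrict_mem T.compact_Om.isClosed.measurableSet
  -- bound on Om
  obtain ⟨C, hC⟩ := isBounded_iff_forall_norm_le.1 T.compact_Om.isBounded
  -- the linear equivalence from linear independence
  let M : (Fin d → ℝ) →ₗ[ℝ] (Fin d → ℝ) :=
    { toFun := fun β => ∑ j : Fin d, β j • (T.v j.succ - T.v 0)
      map_add' := by
        intro a b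
        simp [add_smul, Finset.sum_add_distrib]
      map_smul' := by
        intro r a
        simp [smul_smul, Finset.smul_sum] }
  have hMinj : Function.Injective M := by
    rw [← LinearMap.ker_eq_bot, LinearMap.ker_eq_bot']
    intro β hβ
    funext j
    exact Fintype.linearIndependent_iff.1 hrank β hβ j
  have hMsurj : Function.Surjective M := LinearMap.injective_iff_surjective.1 hMinj
  let e : (Fin d → ℝ) ≃ₗ[ℝ] (Fin d → ℝ) := LinearEquiv.ofBijective M ⟨hMinj, hMsurj⟩
  have hcont : Continuous e.symm := LinearMap.continuous_of_finiteDimensional e.symm.toLinearMap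
  filter_upwards [h1, h2] with x hx hxOm
  -- orbit stays in Om
  have horb : ∀ n : ℕ, T.F^[n] x ∈ T.Om := by
    intro n
    induction n with
    | zero => simpa using hxOm
    | succ n ih =>
      rw [Function.iterate_succ_apply']
      exact T.translate_mem _ _ (T.idx_mem _ ih)
  have hnB : ∀ n : ℕ, T.F^[n] x ∉ B := fun n hn => hx (mem_iUnion.2 ⟨n, hn⟩)
  set f : ℕ → Fin (d + 1) := fun n => T.idx (T.F^[n] x) with hfdef
  -- membership in P i along the orbit is the same as idx = i
  have hidx : ∀ (n : ℕ) (i : Fin (d + 1)), T.F^[n] x ∈ T.P i ↔ f n = i := by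
    intro n i
    constructor
    · intro hPi
      by_contra hne
      have hy1 : T.F^[n] x ∈ T.P (f n) := T.idx_mem _ (horb n)
      by_cases hyi : T.F^[n] x ∈ interior (T.P i)
      · have hnyi : T.F^[n] x ∉ interior (T.P (f n)) := by
          intro hcon
          have := T.disj_P i (f n) (fun h => hne h.symm)
          exact absurd (this ▸ (mem_inter hyi hcon)) (notMem_empty _)
        have : T.F^[n] x ∈ frontier (T.P (f n)) := by
          rw [(T.compact_P (f n)).isClosed.frontier_eq]
          exact ⟨hy1, hnyi⟩
        exact hnB n (mem_iUnion.2 ⟨f n, this⟩)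
      · have : T.F^[n] x ∈ frontier (T.P i) := by
          rw [(T.compact_P i).isClosed.frontier_eq]
          exact ⟨hPi, hyi⟩
        exact hnB n (mem_iUnion.2 ⟨i, this⟩)
    · intro h
      have := T.idx_mem _ (horb n)
      rwa [show T.idx (T.F^[n] x) = i from h] at this
  -- telescoping
  have htel : ∀ k : ℕ, T.F^[k] x - x = ∑ n ∈ Finset.range k, T.v (f n) := by
    intro k
    induction k with
    | zero => simp
    | succ k ih =>
      rw [Finset.sum_range_succ, ← ih, Function.iterate_succ_apply']
      show T.F (T.F^[k] x) - x = _
      simp only [PWT.F, hfdef]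
      abel
  -- counts
  set N : ℕ → Fin (d + 1) → ℕ :=
    fun k i => ((Finset.range k).filter (fun n => f n = i)).card with hNdef
  have hncard : ∀ (k : ℕ) (i : Fin (d + 1)),
      {n : ℕ | n < k ∧ T.F^[n] x ∈ T.P i}.ncard = N k i := by
    intro k i
    have hset : {n : ℕ | n < k ∧ T.F^[n] x ∈ T.P i}
        = ↑((Finset.range k).filter (fun n => f n = i)) := by
      ext n
      simp [Finset.mem_filter, Finset.mem_range, hidx n i]
    rw [hset, Set.ncard_coe_finset]
  have hcardsum : ∀ k : ℕ, ∑ i : Fin (d + 1), N k i = k := by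
    intro k
    have h := Finset.card_eq_sum_card_fiberwise (s := Finset.range k)
      (t := (Finset.univ : Finset (Fin (d + 1)))) (f := f) (fun n _ => Finset.mem_univ (f n))
    rw [Finset.card_range] at h
    simp only [hNdef]
    exact h.symm
  have hsumv : ∀ k : ℕ, ∑ i : Fin (d + 1), N k i • T.v i = T.F^[k] x - x := by
    intro k
    rw [htel k, ← Finset.sum_fiberwise (Finset.range k) f (fun n => T.v (f n))]
    refine Finset.sum_congr rfl fun i _ => ?_
    rw [Finset.sum_congr rfl (fun n hn => by rw [(Finset.mem_filter.1 hn).2]),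
      Finset.sum_const]
  -- the frequency vector
  set c : ℕ → Fin (d + 1) → ℝ := fun k i => (N k i : ℝ) / k with hcdef
  have hcsum : ∀ k : ℕ, 1 ≤ k → ∑ i : Fin (d + 1), c k i = 1 := by
    intro k hk
    rw [hcdef]
    simp only
    rw [← Finset.sum_div, ← Nat.cast_sum, hcardsum k]
    exact div_self (by positivity)
  have hcsumv : ∀ k : ℕ, ∑ i : Fin (d + 1), c k i • T.v i
      = (k : ℝ)⁻¹ • (T.F^[k] x - x) := by
    intro k
    simp only [hcdef, div_eq_inv_mul, mul_smul]
    rw [← Finset.smul_sum]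
    congr 1
    rw [← hsumv k]
    exact Finset.sum_congr rfl fun i _ => by rw [Nat.cast_smul_eq_nsmul]
  -- w k tends to 0
  have hw : Tendsto (fun k : ℕ => (k : ℝ)⁻¹ • (T.F^[k] x - x)) atTop (𝓝 0) := by
    apply squeeze_zero_norm (a := fun k : ℕ => (C + ‖x‖) / k)
    · intro k
      rw [norm_smul, norm_inv, Real.norm_natCast, div_eq_inv_mul]
      refine mul_le_mul_of_nonneg_left ?_ (by positivity)
      calc ‖T.F^[k] x - x‖ ≤ ‖T.F^[k] x‖ + ‖x‖ := norm_sub_le _ _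
        _ ≤ C + ‖x‖ := by
            have := hC _ (horb k)
            linarith
    · exact tendsto_const_div_atTop_nhds_zero_nat _
  -- key identity
  have key : ∀ k : ℕ, 1 ≤ k →
      M (fun j => c k j.succ - α j.succ) = (k : ℝ)⁻¹ • (T.F^[k] x - x) := by
    intro k hk
    show (∑ j : Fin d, (c k j.succ - α j.succ) • (T.v j.succ - T.v 0)) = _
    have expand : ∑ j : Fin d, (c k j.succ - α j.succ) • (T.v j.succ - T.v 0)
        = ∑ i : Fin (d + 1), (c k i - α i) • (T.v i - T.v 0) := by
      rw [Fin.sum_univ_succ]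
      simp
    rw [expand]
    have step : ∑ i : Fin (d + 1), (c k i - α i) • (T.v i - T.v 0)
        = (∑ i, c k i • T.v i) - (∑ i, α i • T.v i)
          - ((∑ i, c k i) - (∑ i, α i)) • T.v 0 := by
      simp only [sub_smul, smul_sub, Finset.sum_sub_distrib]
      rw [← Finset.sum_smul, ← Finset.sum_smul]
    rw [step, hcsumv k, hrel, hcsum k hk, hsum]
    simp
  -- convergence of the successor coordinates
  have hβ : Tendsto (fun k : ℕ => (fun j : Fin d => c k j.succ - α j.succ))
      atTop (𝓝 0) := by
    have h₁ : Tendsto (fun k : ℕ => e.symm ((k : ℝ)⁻¹ • (T.F^[k] x - x)))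
        atTop (𝓝 0) := by
      have := (hcont.tendsto 0).comp hw
      simpa only [Function.comp_def, map_zero] using this
    refine h₁.congr' ?_
    filter_upwards [eventually_ge_atTop 1] with k hk
    have he : e (fun j : Fin d => c k j.succ - α j.succ)
        = (k : ℝ)⁻¹ • (T.F^[k] x - x) := key k hk
    rw [← he, LinearEquiv.symm_apply_apply]
  have hsucc : ∀ j : Fin d, Tendsto (fun k : ℕ => c k j.succ) atTop (𝓝 (α j.succ)) := by
    intro j
    have h₂ : Tendsto (fun k : ℕ => c k j.succ - α j.succ) atTop (𝓝 0) := by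
      have := ((continuous_apply j).tendsto (0 : Fin d → ℝ)).comp hβ
      simpa [Function.comp_def] using this
    have := h₂.add_const (α j.succ)
    simpa using this
  have hzero : Tendsto (fun k : ℕ => c k 0) atTop (𝓝 (α 0)) := by
    have hlim : Tendsto (fun k : ℕ => 1 - ∑ j : Fin d, c k j.succ) atTop
        (𝓝 (1 - ∑ j : Fin d, α j.succ)) :=
      tendsto_const_nhds.sub (tendsto_finset_sum _ fun j _ => hsucc j)
    have hα0 : 1 - ∑ j : Fin d, α j.succ = α 0 := by
      have := hsum
      rw [Fin.sum_univ_succ] at this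
      linarith
    rw [hα0] at hlim
    refine hlim.congr' ?_
    filter_upwards [eventually_ge_atTop 1] with k hk
    have := hcsum k hk
    rw [Fin.sum_univ_succ] at this
    linarith
  intro i
  have hfun : (fun k : ℕ => ({n : ℕ | n < k ∧ T.F^[n] x ∈ T.P i}.ncard : ℝ) / k)
      = fun k : ℕ => c k i := by
    funext k
    rw [hncard k i]
  rw [hfun]
  induction i using Fin.cases with
  | zero => exact hzero
  | succ j => exact hsucc j
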